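/- For every nonnegative integer N and all complex numbers z, w such that z+i, w+i, and w-z+i are not nonpositive integers for every integer i with 0 ≤ i ≤ N, one has the identity ∑_{i=0}^{N} (-1)^i · binom(N,i) · Γ(z+i)/Γ(w+i) = (Γ(z)/Γ(w-z)) · (Γ(w-z+N)/Γ(w+N)), where Γ denotes the complex Gamma function. -/

import Mathlib

open Finset in
private lemma ikeda_pascal_sum (g : ℕ → ℂ) (N : ℕ) :
    ∑ i ∈ range (N + 2), (-1 : ℂ) ^ i * ((N + 1).choose i : ℂ) * g i =
      ∑ i ∈ range (N + 1), (-1 : ℂ) ^ i * (N.choose i : ℂ) * g i -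
        ∑ i ∈ range (N + 1), (-1 : ℂ) ^ i * (N.choose i : ℂ) * g (i + 1) := by
  rw [Finset.sum_range_succ' (fun i => (-1 : ℂ) ^ i * ((N+1).choose i : ℂ) * g i) (N+1),
      Finset.sum_range_succ' (fun i => (-1 : ℂ) ^ i * (N.choose i : ℂ) * g i) N]
  simp only [Nat.choose_succ_succ, Nat.cast_add, Nat.choose_zero_right, Nat.cast_one, pow_zero,
    add_mul, mul_add, Finset.sum_add_distrib]
  rw [Finset.sum_range_succ (fun i => (-1:ℂ)^(i+1) * (N.choose (i+1) : ℂ) * g (i+1)) N]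
  simp only [Nat.choose_succ_self, Nat.cast_zero, mul_zero, zero_mul, add_zero]
  have : ∑ x ∈ range (N+1), (-1:ℂ)^(x+1) * (N.choose x : ℂ) * g (x+1)
      = -∑ x ∈ range (N+1), (-1:ℂ)^x * (N.choose x : ℂ) * g (x+1) := by
    rw [← Finset.sum_neg_distrib]
    exact Finset.sum_congr rfl fun i _ => by ring
  rw [this]; ring

/-- Ikeda's Gamma-function summation identity:
`∑_{i=0}^{N} (-1)^i C(N,i) Γ(z+i)/Γ(w+i) = (Γ(z)/Γ(w-z)) (Γ(w-z+N)/Γ(w+N))`,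
valid whenever `z+i`, `w+i`, `w-z+i` are not nonpositive integers for `0 ≤ i ≤ N`. -/
theorem ikeda_gamma_identity (N : ℕ) (z w : ℂ)
    (h : ∀ i : ℕ, i ≤ N →
      (∀ k : ℕ, z + (i : ℂ) ≠ -(k : ℂ)) ∧
      (∀ k : ℕ, w + (i : ℂ) ≠ -(k : ℂ)) ∧
      (∀ k : ℕ, w - z + (i : ℂ) ≠ -(k : ℂ))) :
    ∑ i ∈ Finset.range (N + 1),
        (-1 : ℂ) ^ i * (N.choose i : ℂ) * Complex.Gamma (z + i) / Complex.Gamma (w + i) =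
      Complex.Gamma z / Complex.Gamma (w - z) *
        (Complex.Gamma (w - z + N) / Complex.Gamma (w + N)) := by
  induction N generalizing z w with
  | zero =>
      have hwz : Complex.Gamma (w - z) ≠ 0 := by
        apply Complex.Gamma_ne_zero
        intro m
        have := (h 0 le_rfl).2.2 m
        simpa using this
      simp only [zero_add, Finset.sum_range_one, pow_zero, Nat.choose_zero_right, Nat.cast_one,
        Nat.cast_zero, add_zero, one_mul]
      field_simp
  | succ N ih =>
      have hform : ∀ (M : ℕ) (z w : ℂ), ∑ i ∈ Finset.range (M + 1),
          (-1 : ℂ) ^ i * (M.choose i : ℂ) * Complex.Gamma (z + i) / Complex.Gamma (w + i)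
          = ∑ i ∈ Finset.range (M + 1),
          (-1 : ℂ) ^ i * (M.choose i : ℂ) * (Complex.Gamma (z + i) / Complex.Gamma (w + i)) := by
        intro M z w; exact Finset.sum_congr rfl fun i _ => by ring
      rw [show N + 1 + 1 = N + 2 from rfl, hform (N+1) z w,
        ikeda_pascal_sum (fun i => Complex.Gamma (z + i) / Complex.Gamma (w + i)) N]
      have h1 : ∀ i : ℕ, i ≤ N →
          (∀ k : ℕ, z + (i : ℂ) ≠ -(k : ℂ)) ∧
          (∀ k : ℕ, w + (i : ℂ) ≠ -(k : ℂ)) ∧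
          (∀ k : ℕ, w - z + (i : ℂ) ≠ -(k : ℂ)) :=
        fun i hi => h i (le_trans hi (Nat.le_succ N))
      have h2 : ∀ i : ℕ, i ≤ N →
          (∀ k : ℕ, (z+1) + (i : ℂ) ≠ -(k : ℂ)) ∧
          (∀ k : ℕ, (w+1) + (i : ℂ) ≠ -(k : ℂ)) ∧
          (∀ k : ℕ, (w+1) - (z+1) + (i : ℂ) ≠ -(k : ℂ)) := by
        intro i hi
        obtain ⟨ha, hb, _⟩ := h (i+1) (Nat.succ_le_succ hi)
        obtain ⟨_, _, hc⟩ := h i (le_trans hi (Nat.le_succ N))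
        refine ⟨fun k => ?_, fun k => ?_, fun k => ?_⟩
        · have := ha k; push_cast at this ⊢; intro e; apply this; linear_combination e
        · have := hb k; push_cast at this ⊢; intro e; apply this; linear_combination e
        · have := hc k; push_cast at this ⊢; intro e; apply this; linear_combination e
      have hA : ∑ i ∈ Finset.range (N + 1),
          (-1 : ℂ) ^ i * (N.choose i : ℂ) * (Complex.Gamma (z + i) / Complex.Gamma (w + i)) =
          Complex.Gamma z / Complex.Gamma (w - z) *
            (Complex.Gamma (w - z + N) / Complex.Gamma (w + N)) :=
        (hform N z w).symm.trans (ih z w h1)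
      have hB : ∑ i ∈ Finset.range (N + 1),
          (-1 : ℂ) ^ i * (N.choose i : ℂ) *
            (Complex.Gamma (z + ↑(i+1)) / Complex.Gamma (w + ↑(i+1))) =
          Complex.Gamma (z+1) / Complex.Gamma ((w+1) - (z+1)) *
            (Complex.Gamma ((w+1) - (z+1) + N) / Complex.Gamma ((w+1) + N)) := by
        have e2 : ∑ i ∈ Finset.range (N + 1),
            (-1 : ℂ) ^ i * (N.choose i : ℂ) *
              (Complex.Gamma (z + ↑(i+1)) / Complex.Gamma (w + ↑(i+1)))
            = ∑ i ∈ Finset.range (N + 1),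
            (-1 : ℂ) ^ i * (N.choose i : ℂ) *
              Complex.Gamma ((z+1) + i) / Complex.Gamma ((w+1) + i) := by
          refine Finset.sum_congr rfl fun i _ => ?_
          push_cast
          rw [show z + (↑i + 1) = z + 1 + ↑i by ring, show w + (↑i + 1) = w + 1 + ↑i by ring]
          ring
        exact e2.trans (ih (z+1) (w+1) h2)
      rw [hA, hB]
      -- pure Gamma algebra
      have hz0 : z ≠ 0 := by have := (h 0 (Nat.zero_le _)).1 0; simpa using this
      have hwN : (w + (N:ℂ)) ≠ 0 := by
        have := (h N (Nat.le_succ N)).2.1 0; simpa using this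
      have hwzN : (w - z + (N:ℂ)) ≠ 0 := by
        have := (h N (Nat.le_succ N)).2.2 0; simpa using this
      have hGwz : Complex.Gamma (w - z) ≠ 0 := by
        apply Complex.Gamma_ne_zero; intro m
        have := (h 0 (Nat.zero_le _)).2.2 m; simpa using this
      have hGwN : Complex.Gamma (w + N) ≠ 0 := by
        apply Complex.Gamma_ne_zero; intro m
        have := (h N (Nat.le_succ N)).2.1 m; simpa using this
      have hGwN1 : Complex.Gamma (w + (N:ℂ) + 1) = (w + N) * Complex.Gamma (w + N) :=
        Complex.Gamma_add_one _ hwN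
      have hGwzN1 : Complex.Gamma (w - z + (N:ℂ) + 1) = (w - z + N) * Complex.Gamma (w - z + N) :=
        Complex.Gamma_add_one _ hwzN
      have hGz1 : Complex.Gamma (z + 1) = z * Complex.Gamma z := Complex.Gamma_add_one _ hz0
      have hsub : w + 1 - (z + 1) = w - z := by ring
      push_cast
      rw [show w - z + ((N:ℂ) + 1) = w - z + (N:ℂ) + 1 by ring,
          show w + ((N:ℂ) + 1) = w + (N:ℂ) + 1 by ring,
          show w + 1 + (N:ℂ) = w + (N:ℂ) + 1 by ring,
          hsub,
          show w - z + (N:ℂ) = w - z + (N:ℂ) from rfl,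
          hGwN1, hGwzN1, hGz1]
      field_simp
      ring
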